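/- Let L ≥ 1, let K be an L×L integer matrix satisfying K·Kᵀ = m·I_L for some positive integer m, and let Λ' ⊂ ℤ^L be the ℤ-span of the rows of K (a geometrically similar sublattice of ℤ^L). Then Λ' is clean in ℤ^L — i.e. every x ∈ ℤ^L has a unique nearest point of Λ' in the Euclidean norm — if and only if m is odd. -/

import Mathlib

open Finset

/-- The integer lattice `ℤ^L` inside `EuclideanSpace ℝ (Fin L)`:
the `ℤ`-span of the standard basis vectors. -/
noncomputable def Zlat (L : ℕ) : AddSubgroup (EuclideanSpace ℝ (Fin L)) :=
  AddSubgroup.closure (Set.range fun i => EuclideanSpace.single i (1 : ℝ))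

/-- The `ℤ`-span of the rows of an integer matrix `K`, as a sublattice of `ℝ^L`. -/
noncomputable def rowLattice {L : ℕ} (K : Matrix (Fin L) (Fin L) ℤ) :
    AddSubgroup (EuclideanSpace ℝ (Fin L)) :=
  AddSubgroup.closure
    (Set.range fun i => (WithLp.equiv 2 (Fin L → ℝ)).symm fun j => (K i j : ℝ))

/-- `Λ'` is clean in `Λ`: every point of `Λ` has a unique nearest point of `Λ'`
in the Euclidean norm. -/
def IsClean {L : ℕ} (Λ Λ' : AddSubgroup (EuclideanSpace ℝ (Fin L))) : Prop :=
  ∀ x ∈ Λ, ∃! p, p ∈ Λ' ∧ ∀ q ∈ Λ', ‖x - p‖ ≤ ‖x - q‖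

lemma PiLp_sum_apply {n : ℕ} {ι : Type*} (s : Finset ι) (f : ι → EuclideanSpace ℝ (Fin n))
    (j : Fin n) : (∑ i ∈ s, f i) j = ∑ i ∈ s, f i j := by
  classical
  induction s using Finset.cons_induction with
  | empty => rfl
  | cons a s ha ih => rw [Finset.sum_cons, Finset.sum_cons, ← ih]; rfl

noncomputable def rowVec {L : ℕ} (K : Matrix (Fin L) (Fin L) ℤ) (i : Fin L) :
    EuclideanSpace ℝ (Fin L) :=
  (WithLp.equiv 2 (Fin L → ℝ)).symm fun j => (K i j : ℝ)

lemma mem_closure_range_iff {L : ℕ} (v : Fin L → EuclideanSpace ℝ (Fin L))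
    (p : EuclideanSpace ℝ (Fin L)) :
    p ∈ AddSubgroup.closure (Set.range v) ↔ ∃ a : Fin L → ℤ, ∑ i, (a i : ℝ) • v i = p := by
  rw [← Submodule.span_int_eq_addSubgroupClosure, Submodule.mem_toAddSubgroup,
    Submodule.mem_span_range_iff_exists_fun]
  constructor
  · rintro ⟨c, hc⟩; exact ⟨c, by simpa [← Int.cast_smul_eq_zsmul ℝ] using hc⟩
  · rintro ⟨c, hc⟩; exact ⟨c, by simpa [← Int.cast_smul_eq_zsmul ℝ] using hc⟩

lemma inner_rowVec {L : ℕ} (K : Matrix (Fin L) (Fin L) ℤ) (m : ℕ)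
    (hK : K * K.transpose = (m : ℤ) • (1 : Matrix (Fin L) (Fin L) ℤ)) (i i' : Fin L) :
    (inner ℝ (rowVec K i) (rowVec K i') : ℝ) = if i = i' then (m : ℝ) else 0 := by
  have h := congrFun (congrFun hK i) i'
  simp [Matrix.mul_apply, Matrix.one_apply, Matrix.smul_apply] at h
  have : (∑ j, K i j * K i' j : ℤ) = (m : ℤ) * (if i = i' then 1 else 0) := by
    simpa [Matrix.transpose_apply, mul_comm] using h
  simp only [rowVec, PiLp.inner_apply, RCLike.inner_apply, starRingEnd_apply]
  have := congrArg (fun z : ℤ => (z : ℝ)) this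
  push_cast at this
  simp only [WithLp.equiv_symm_apply, PiLp.toLp_apply]
  rw [show (∑ j, (K i' j : ℝ) * star (K i j : ℝ)) = ∑ j, (K i j : ℝ) * (K i' j : ℝ) by
    simp [star_trivial, mul_comm]]
  rw [this]
  split <;> simp

lemma norm_comb_sq {L : ℕ} (K : Matrix (Fin L) (Fin L) ℤ) (m : ℕ)
    (hK : K * K.transpose = (m : ℤ) • (1 : Matrix (Fin L) (Fin L) ℤ)) (d : Fin L → ℝ) :
    ‖∑ i, d i • rowVec K i‖ ^ 2 = (m : ℝ) * ∑ i, d i ^ 2 := by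
  rw [← real_inner_self_eq_norm_sq]
  rw [sum_inner]
  simp_rw [inner_sum, real_inner_smul_left, real_inner_smul_right, inner_rowVec K m hK]
  rw [Finset.mul_sum]
  refine Finset.sum_congr rfl fun i _ => ?_
  rw [Finset.sum_eq_single i]
  · simp [sq]; ring
  · intro b _ hb; simp [hb.symm]
  · simp

lemma KtK {L : ℕ} (K : Matrix (Fin L) (Fin L) ℤ) (m : ℕ) (hm : 0 < m)
    (hK : K * K.transpose = (m : ℤ) • (1 : Matrix (Fin L) (Fin L) ℤ)) :
    K.transpose * K = (m : ℤ) • (1 : Matrix (Fin L) (Fin L) ℤ) := by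
  have hmQ : (m : ℚ) ≠ 0 := by positivity
  set A := K.map (Int.cast : ℤ → ℚ) with hAdef
  have hA : A * A.transpose = (m : ℚ) • 1 := by
    ext i j
    have h := congrArg (Int.cast : ℤ → ℚ) (congrFun (congrFun hK i) j)
    simp only [Matrix.mul_apply, Matrix.transpose_apply, Matrix.smul_apply, Matrix.one_apply,
      smul_eq_mul, hAdef, Matrix.map_apply] at h ⊢
    push_cast [apply_ite (Int.cast : ℤ → ℚ)] at h
    rw [h]
  have h1 : A * ((m : ℚ)⁻¹ • A.transpose) = 1 := by
    rw [Matrix.mul_smul, hA, smul_smul, inv_mul_cancel₀ hmQ, one_smul]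
  have h2 := mul_eq_one_comm.mp h1
  have h3 : A.transpose * A = (m : ℚ) • 1 := by
    have := congrArg (fun M => (m : ℚ) • M) h2
    simp only [Matrix.smul_mul, smul_smul, mul_inv_cancel₀ hmQ, one_smul, smul_one_mul] at this
    simpa using this
  ext i j
  have h5 := congrFun (congrFun h3 i) j
  simp only [Matrix.mul_apply, Matrix.map_apply, Matrix.transpose_apply, Matrix.smul_apply,
    Matrix.one_apply, smul_eq_mul, hAdef] at h5 ⊢
  have h4 : ((∑ k, K k i * K k j : ℤ) : ℚ) = (((m : ℤ) * (if i = j then 1 else 0) : ℤ) : ℚ) := by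
    push_cast [apply_ite (Int.cast : ℤ → ℚ)]
    rw [← h5]
  exact_mod_cast h4

lemma sum_k_mul {L : ℕ} (K : Matrix (Fin L) (Fin L) ℤ) (m : ℕ) (hm : 0 < m)
    (hK : K * K.transpose = (m : ℤ) • (1 : Matrix (Fin L) (Fin L) ℤ))
    (v : Fin L → ℤ) (j : Fin L) :
    ∑ i, (∑ j', v j' * K i j') * K i j = (m : ℤ) * v j := by
  have h := KtK K m hm hK
  calc ∑ i, (∑ j', v j' * K i j') * K i j
      = ∑ j', v j' * ∑ i, K.transpose j' i * K i j := by
        simp_rw [Finset.sum_mul, Finset.mul_sum]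
        rw [Finset.sum_comm]
        refine Finset.sum_congr rfl fun j' _ => Finset.sum_congr rfl fun i _ => ?_
        simp [Matrix.transpose_apply]; ring
    _ = ∑ j', v j' * (K.transpose * K) j' j := by simp [Matrix.mul_apply]
    _ = (m : ℤ) * v j := by
        rw [h]
        simp only [Matrix.smul_apply, Matrix.one_apply, smul_eq_mul]
        rw [Finset.sum_eq_single j] <;> simp +contextual [mul_comm]

lemma decomp {L : ℕ} (K : Matrix (Fin L) (Fin L) ℤ) (m : ℕ) (hm : 0 < m)
    (hK : K * K.transpose = (m : ℤ) • (1 : Matrix (Fin L) (Fin L) ℤ)) (v : Fin L → ℤ) :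
    (WithLp.equiv 2 (Fin L → ℝ)).symm (fun j => (v j : ℝ))
      = ∑ i, (((∑ j', v j' * K i j' : ℤ) : ℝ) / (m : ℝ)) • rowVec K i := by
  have hmR : (m : ℝ) ≠ 0 := by positivity
  ext j
  rw [PiLp_sum_apply]
  simp only [WithLp.equiv_symm_apply, PiLp.toLp_apply, PiLp.smul_apply, rowVec, smul_eq_mul]
  have h := sum_k_mul K m hm hK v j
  have h' : ((∑ i, (∑ j', v j' * K i j') * K i j : ℤ) : ℝ) = (m : ℝ) * v j := by
    exact_mod_cast congrArg (Int.cast : ℤ → ℝ) h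
  push_cast at h'
  simp_rw [div_mul_eq_mul_div]
  rw [← Finset.sum_div]
  push_cast
  rw [h', mul_comm, mul_div_assoc, div_self hmR, mul_one]

lemma dist_sq {L : ℕ} (K : Matrix (Fin L) (Fin L) ℤ) (m : ℕ) (hm : 0 < m)
    (hK : K * K.transpose = (m : ℤ) • (1 : Matrix (Fin L) (Fin L) ℤ)) (v : Fin L → ℤ)
    (a : Fin L → ℤ) :
    ‖(WithLp.equiv 2 (Fin L → ℝ)).symm (fun j => (v j : ℝ)) - ∑ i, (a i : ℝ) • rowVec K i‖ ^ 2
      = (m : ℝ) * ∑ i, (((∑ j', v j' * K i j' : ℤ) : ℝ) / (m : ℝ) - (a i : ℝ)) ^ 2 := by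
  rw [decomp K m hm hK v, ← Finset.sum_sub_distrib]
  simp_rw [← sub_smul]
  exact norm_comb_sq K m hK _

lemma mem_rowLattice_iff {L : ℕ} (K : Matrix (Fin L) (Fin L) ℤ)
    (p : EuclideanSpace ℝ (Fin L)) :
    p ∈ rowLattice K ↔ ∃ a : Fin L → ℤ, ∑ i, (a i : ℝ) • rowVec K i = p :=
  mem_closure_range_iff _ p

lemma mem_Zlat_iff {L : ℕ} (x : EuclideanSpace ℝ (Fin L)) :
    x ∈ Zlat L ↔ ∃ v : Fin L → ℤ,
      (WithLp.equiv 2 (Fin L → ℝ)).symm (fun j => (v j : ℝ)) = x := by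
  rw [Zlat, mem_closure_range_iff]
  refine exists_congr fun a => ?_
  constructor <;> intro h <;> rw [← h] <;> ext j <;>
    simp [PiLp_sum_apply, EuclideanSpace.single_apply, WithLp.equiv_symm_apply, PiLp.toLp_apply]

lemma g_dvd_of_sq_dvd_two_mul (g h : ℤ) (hd : g ^ 2 ∣ 2 * h) : g ∣ h := by
  rcases Int.even_or_odd g with he | ho
  · obtain ⟨e, rfl⟩ := he
    obtain ⟨t, ht⟩ := hd
    have h' : h = 2 * e ^ 2 * t := by nlinarith [ht]
    exact ⟨e * t, by rw [h']; ring⟩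
  · have hcop : IsCoprime (2 : ℤ) g := by
      rw [Int.isCoprime_iff_gcd_eq_one]
      exact Nat.coprime_two_left.mpr (Int.natAbs_odd.mpr ho)
    have hcop2 : IsCoprime (g ^ 2) 2 := IsCoprime.pow_left hcop.symm
    have hd2 : g ^ 2 ∣ h := by
      refine hcop2.dvd_of_dvd_mul_right ?_
      rwa [mul_comm] at hd
    exact (dvd_pow_self g two_ne_zero).trans hd2

lemma min_term (c : ℝ) (n : ℤ) : (c - round c) ^ 2 ≤ (c - (n : ℝ)) ^ 2 := by
  rcases le_or_gt (|c - round c|) (|c - (n : ℝ)|) with h | h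
  · calc (c - (round c : ℝ)) ^ 2 = |c - round c| ^ 2 := (sq_abs _).symm
      _ ≤ |c - (n : ℝ)| ^ 2 := pow_le_pow_left₀ (abs_nonneg _) h 2
      _ = (c - (n : ℝ)) ^ 2 := sq_abs _
  · exfalso
    have h1 : |c - round c| ≤ 1 / 2 := abs_sub_round c
    have h2 : |(round c : ℝ) - n| < 1 := by
      calc |(round c : ℝ) - n| ≤ |(round c : ℝ) - c| + |c - n| := abs_sub_le _ _ _
        _ < 1 := by rw [abs_sub_comm]; linarith
    have h3 : round c = n := by
      have h4 : |((round c - n : ℤ) : ℝ)| < 1 := by push_cast; exact h2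
      have h5 : |round c - n| < 1 := by exact_mod_cast h4
      have := Int.abs_lt_one_iff.mp h5
      omega
    rw [h3] at h; exact lt_irrefl _ h

lemma eq_case {c : ℝ} {a b : ℤ} (h : (c - (a : ℝ)) ^ 2 = (c - (b : ℝ)) ^ 2) :
    a = b ∨ 2 * c = (a : ℝ) + b := by
  have h0 : ((a : ℝ) - b) * (2 * c - a - b) = 0 := by nlinarith [h]
  rcases mul_eq_zero.mp h0 with h1 | h1
  · left; exact_mod_cast sub_eq_zero.mp h1
  · right; linarith [sub_eq_zero.mp (by linarith : 2 * c - ((a : ℝ) + b) = 0)]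

lemma quarter_le (n : ℤ) : (1 / 4 : ℝ) ≤ (1 / 2 - (n : ℝ)) ^ 2 := by
  have hz : n ≤ n ^ 2 := by rcases le_or_gt n 0 with h | h <;> nlinarith
  have hz' : (n : ℝ) ≤ (n : ℝ) ^ 2 := by exact_mod_cast hz
  nlinarith

theorem stmt6 {L : ℕ} (hL : 1 ≤ L) (K : Matrix (Fin L) (Fin L) ℤ) (m : ℕ) (hm : 0 < m)
    (hK : K * K.transpose = (m : ℤ) • (1 : Matrix (Fin L) (Fin L) ℤ)) :
    IsClean (Zlat L) (rowLattice K) ↔ Odd m := by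
  have hmR : (0 : ℝ) < m := by positivity
  constructor
  · -- contrapositive: m even → not clean
    intro hclean
    by_contra hodd
    rw [Nat.not_odd_iff_even] at hodd
    obtain ⟨h0, hm2⟩ := hodd
    have hm2 : m = 2 * h0 := by omega
    have h0pos : 0 < h0 := by omega
    set i₀ : Fin L := ⟨0, hL⟩ with hi₀
    set I : Ideal ℤ := Ideal.span (Set.range fun j => K i₀ j) with hI
    have hgen : ∀ j, Submodule.IsPrincipal.generator I ∣ K i₀ j := fun j =>
      (Submodule.IsPrincipal.mem_iff_generator_dvd I).mp (Ideal.subset_span ⟨j, rfl⟩)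
    have hrow : ∑ j, K i₀ j * K i₀ j = (m : ℤ) := by
      have h := congrFun (congrFun hK i₀) i₀
      simpa [Matrix.mul_apply, Matrix.transpose_apply, Matrix.smul_apply,
        Matrix.one_apply] using h
    have hsq : (Submodule.IsPrincipal.generator I) ^ 2 ∣ (m : ℤ) := by
      rw [← hrow]
      exact Finset.dvd_sum fun j _ => by rw [sq]; exact mul_dvd_mul (hgen j) (hgen j)
    have hdvd : Submodule.IsPrincipal.generator I ∣ (h0 : ℤ) := by
      apply g_dvd_of_sq_dvd_two_mul _ _
      rwa [show (2 : ℤ) * h0 = (m : ℤ) from by exact_mod_cast hm2.symm]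
    have hmem : (h0 : ℤ) ∈ I := (Submodule.IsPrincipal.mem_iff_generator_dvd I).mpr hdvd
    obtain ⟨v, hv⟩ := (Ideal.mem_span_range_iff_exists_fun).mp hmem
    set x := (WithLp.equiv 2 (Fin L → ℝ)).symm fun j => (v j : ℝ) with hxdef
    have hx : x ∈ Zlat L := (mem_Zlat_iff x).mpr ⟨v, rfl⟩
    have hc0 : ((∑ j', v j' * K i₀ j' : ℤ) : ℝ) / m = 1 / 2 := by
      rw [show (∑ j', v j' * K i₀ j' : ℤ) = (h0 : ℤ) from hv]
      rw [hm2]; push_cast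
      rw [div_eq_iff (by positivity : ((2 : ℝ) * h0) ≠ 0)]; ring
    set a : Fin L → ℤ := fun i => if i = i₀ then 0 else round (((∑ j', v j' * K i j' : ℤ) : ℝ) / m) with ha
    set b : Fin L → ℤ := fun i => if i = i₀ then 1 else round (((∑ j', v j' * K i j' : ℤ) : ℝ) / m) with hb
    have hmin : ∀ w : Fin L → ℤ, (w i₀ = 0 ∨ w i₀ = 1) →
        (∀ i, i ≠ i₀ → w i = round (((∑ j', v j' * K i j' : ℤ) : ℝ) / m)) →
        ∀ q ∈ rowLattice K, ‖x - ∑ i, (w i : ℝ) • rowVec K i‖ ≤ ‖x - q‖ := by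
      intro w hw0 hwi q hq
      obtain ⟨bq, rfl⟩ := (mem_rowLattice_iff K q).mp hq
      apply le_of_pow_le_pow_left₀ two_ne_zero (norm_nonneg _)
      rw [hxdef, dist_sq K m hm hK, dist_sq K m hm hK]
      apply mul_le_mul_of_nonneg_left _ hmR.le
      apply Finset.sum_le_sum
      intro i _
      rcases eq_or_ne i i₀ with rfl | hi
      · rw [hc0]
        rcases hw0 with h | h <;> rw [h] <;> push_cast <;>
          nlinarith [quarter_le (bq i₀)]
      · rw [hwi i hi]; exact min_term _ _
    obtain ⟨p, hp, hpu⟩ := hclean x hx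
    have hamem : (∑ i, (a i : ℝ) • rowVec K i) ∈ rowLattice K :=
      (mem_rowLattice_iff K _).mpr ⟨a, rfl⟩
    have hbmem : (∑ i, (b i : ℝ) • rowVec K i) ∈ rowLattice K :=
      (mem_rowLattice_iff K _).mpr ⟨b, rfl⟩
    have ha' := hpu (∑ i, (a i : ℝ) • rowVec K i)
      ⟨hamem, hmin a (Or.inl (by simp [ha])) (fun i hi => by simp [ha, hi])⟩
    have hb' := hpu (∑ i, (b i : ℝ) • rowVec K i)
      ⟨hbmem, hmin b (Or.inr (by simp [hb])) (fun i hi => by simp [hb, hi])⟩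
    have hab : (∑ i, (a i : ℝ) • rowVec K i) = ∑ i, (b i : ℝ) • rowVec K i :=
      ha'.trans hb'.symm
    have hd : ‖(∑ i, (a i : ℝ) • rowVec K i) - ∑ i, (b i : ℝ) • rowVec K i‖ ^ 2
        = (m : ℝ) * ∑ i, ((a i : ℝ) - (b i : ℝ)) ^ 2 := by
      rw [show (∑ i, (a i : ℝ) • rowVec K i) - ∑ i, (b i : ℝ) • rowVec K i
          = ∑ i, ((a i : ℝ) - (b i : ℝ)) • rowVec K i from by
        rw [← Finset.sum_sub_distrib]; simp_rw [← sub_smul]]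
      exact norm_comb_sq K m hK _
    rw [hab, sub_self, norm_zero] at hd
    have hterm : ((a i₀ : ℝ) - (b i₀ : ℝ)) ^ 2 = 1 := by simp [ha, hb]
    have hge : (1 : ℝ) ≤ ∑ i, ((a i : ℝ) - (b i : ℝ)) ^ 2 := by
      rw [← hterm]
      exact Finset.single_le_sum (f := fun i => ((a i : ℝ) - (b i : ℝ)) ^ 2)
        (fun i _ => sq_nonneg _) (Finset.mem_univ i₀)
    nlinarith [hd, hge]
  · -- Odd m → clean
    intro hodd x hx
    obtain ⟨v, rfl⟩ := (mem_Zlat_iff x).mp hx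
    set a : Fin L → ℤ := fun i => round (((∑ j', v j' * K i j' : ℤ) : ℝ) / m) with ha
    refine ⟨∑ i, (a i : ℝ) • rowVec K i, ⟨(mem_rowLattice_iff K _).mpr ⟨a, rfl⟩, ?_⟩, ?_⟩
    · intro q hq
      obtain ⟨bq, rfl⟩ := (mem_rowLattice_iff K q).mp hq
      apply le_of_pow_le_pow_left₀ two_ne_zero (norm_nonneg _)
      rw [dist_sq K m hm hK, dist_sq K m hm hK]
      exact mul_le_mul_of_nonneg_left
        (Finset.sum_le_sum fun i _ => min_term _ (bq i)) hmR.le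
    · rintro p ⟨hp, hpmin⟩
      obtain ⟨bq, rfl⟩ := (mem_rowLattice_iff K p).mp hp
      have hle := hpmin (∑ i, (a i : ℝ) • rowVec K i) ((mem_rowLattice_iff K _).mpr ⟨a, rfl⟩)
      have h2 := pow_le_pow_left₀ (norm_nonneg _) hle 2
      rw [dist_sq K m hm hK, dist_sq K m hm hK] at h2
      have h3 : ∑ i, (((∑ j', v j' * K i j' : ℤ) : ℝ) / m - (bq i : ℝ)) ^ 2
          ≤ ∑ i, (((∑ j', v j' * K i j' : ℤ) : ℝ) / m - (a i : ℝ)) ^ 2 :=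
        le_of_mul_le_mul_left h2 hmR
      have h4 : ∀ i ∈ Finset.univ, (((∑ j', v j' * K i j' : ℤ) : ℝ) / m - (a i : ℝ)) ^ 2
          ≤ (((∑ j', v j' * K i j' : ℤ) : ℝ) / m - (bq i : ℝ)) ^ 2 :=
        fun i _ => min_term _ _
      have h5 := le_antisymm (Finset.sum_le_sum h4) h3
      have h6 := (Finset.sum_eq_sum_iff_of_le h4).mp h5
      have hkey : ∀ i, bq i = a i := by
        intro i
        have h7 := h6 i (Finset.mem_univ i)
        rcases eq_case h7 with h8 | h8
        · exact h8.symm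
        · -- 2c = a + bq ⇒ m ∣ 2k ⇒ m ∣ k ⇒ c integer
          set k : ℤ := ∑ j', v j' * K i j' with hk
          have h9 : (2 * k : ℝ) = (m : ℝ) * ((a i : ℝ) + (bq i : ℝ)) := by
            field_simp at h8; push_cast; linarith [h8]
          have h10 : (2 * k : ℤ) = (m : ℤ) * (a i + bq i) := by exact_mod_cast h9
          have h11 : (m : ℤ) ∣ 2 * k := ⟨a i + bq i, h10⟩
          have hcop : IsCoprime (m : ℤ) 2 := by
            rw [Int.isCoprime_iff_gcd_eq_one]
            have hc : Nat.Coprime m 2 := Nat.coprime_two_right.mpr hodd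
            simpa [Int.gcd] using hc
          have h12 : (m : ℤ) ∣ k := hcop.dvd_of_dvd_mul_left h11
          obtain ⟨t, ht⟩ := h12
          have hct : ((k : ℝ)) / m = (t : ℝ) := by
            rw [ht]; push_cast; field_simp
          have hat : a i = t := by
            show round ((k : ℝ) / m) = t
            rw [hct]; exact round_intCast t
          have hzero : ((k : ℝ) / m - (a i : ℝ)) ^ 2 = 0 := by
            rw [hct, hat]; ring
          have hbz : ((k : ℝ) / m - (bq i : ℝ)) ^ 2 = 0 := by rw [← h7, hzero]
          have hbt : (bq i : ℝ) = (k : ℝ) / m := by nlinarith [hbz]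
          have hfin : (bq i : ℝ) = (a i : ℝ) := by rw [hbt, hct, hat]
          exact_mod_cast hfin
      exact Finset.sum_congr rfl fun i _ => by rw [hkey i]
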